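/- Let (B,[·,·]) be a bracket algebra lift of a Lie algebra L over R_k, and let ⟨·,·⟩ ∈ Λ²(L̄, ad) be an alternating bilinear form on the residue-field reduction L̄. Define a new bracket [x,y]' = [x,y] + ψ(⟨λ(x),λ(y)⟩), where λ : B → L̄ is reduction mod π and ψ : L̄ → π^k B is the inverse of χ. Then the induced Jacobiator 3-forms satisfy J' = J − d⟨·,·⟩ in Λ³(L̄, ad). In particular J and J' are cohomologous. -/

import Mathlib

open Pointwise

/-- `Rmod R π m` is the quotient ring `R/π^m R`. -/
abbrev Rmod (R : Type) [CommRing R] (π : R) (m : ℕ) : Type :=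
  R ⧸ Ideal.span {π ^ m}

section Setup

variable (R : Type) [CommRing R] (π : R) (k : ℕ)
variable (B : Type) [AddCommGroup B] [Module (Rmod R π (k + 1)) B]

/-- The image of `π` in `R_{k+1}`. -/
noncomputable abbrev pbar : Rmod R π (k + 1) := Ideal.Quotient.mk _ π

/-- The submodule `π^k B` of `B`. -/
noncomputable abbrev pikB : Submodule (Rmod R π (k + 1)) B :=
  (pbar R π k) ^ k • (⊤ : Submodule (Rmod R π (k + 1)) B)

/-- The submodule `π B` of `B`. -/
noncomputable abbrev piB : Submodule (Rmod R π (k + 1)) B :=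
  (pbar R π k) • (⊤ : Submodule (Rmod R π (k + 1)) B)

/-- `L = B/π^k B`, the reduction of `B` to a module over `R_k`. -/
noncomputable abbrev Lred := B ⧸ pikB R π k B

/-- `L̄ = B/πB`, the reduction of `B` to a vector space over the residue field. -/
noncomputable abbrev Lbar := B ⧸ piB R π k B

/-- The reduction map `mod : B → L = B/π^k B`. -/
noncomputable abbrev modk : B →ₗ[Rmod R π (k + 1)] Lred R π k B :=
  (pikB R π k B).mkQ

/-- The reduction map `λ : B → L̄ = B/πB`. -/
noncomputable abbrev lam : B →ₗ[Rmod R π (k + 1)] Lbar R π k B :=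
  (piB R π k B).mkQ

/-- `ψ : L̄ → B`, the map sending `x mod πB` to `π^k x`; its (corestriction to `π^k B`)
is the inverse of the canonical isomorphism `χ : π^k B → L̄`. -/
noncomputable def psi : Lbar R π k B →ₗ[Rmod R π (k + 1)] B :=
  Submodule.liftQ _ ((pbar R π k) ^ k • (LinearMap.id : B →ₗ[Rmod R π (k + 1)] B))
    (by
      intro x hx
      rw [← SetLike.mem_coe, Submodule.coe_pointwise_smul, Set.mem_smul_set] at hx
      obtain ⟨y, -, rfl⟩ := hx
      have h0 : (pbar R π k) ^ k * pbar R π k = 0 := by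
        rw [← pow_succ, ← map_pow, Ideal.Quotient.eq_zero_iff_mem]
        exact Ideal.mem_span_singleton_self _
      simp only [LinearMap.mem_ker, LinearMap.smul_apply, LinearMap.id_apply, smul_smul]
      rw [h0, zero_smul])

@[simp] theorem psi_apply (x : B) :
    psi R π k B (lam R π k B x) = ((pbar R π k) ^ k) • x := rfl

end Setup


theorem ring_div (R : Type) [CommRing R] [IsDomain R] (π : R) (hπ : π ≠ 0) (k : ℕ)
    (a : Rmod R π (k + 1)) (h : (pbar R π k) ^ k * a = 0) :
    ∃ s, a = pbar R π k * s := by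
  obtain ⟨r, rfl⟩ := Ideal.Quotient.mk_surjective a
  rw [← map_pow, ← map_mul, Ideal.Quotient.eq_zero_iff_mem, Ideal.mem_span_singleton] at h
  obtain ⟨c, hc⟩ := h
  refine ⟨Ideal.Quotient.mk _ c, ?_⟩
  rw [← map_mul]
  congr 1
  have h2 : π ^ k * r = π ^ k * (π * c) := by rw [hc]; ring
  exact mul_left_cancel₀ (pow_ne_zero k hπ) h2

/-- If `[x,y]' = [x,y] + ψ(⟨λ(x),λ(y)⟩)` for an alternating bilinear form
`⟨·,·⟩ ∈ Λ²(L̄, ad)`, then the induced Jacobiator 3-forms satisfy `J' = J − d⟨·,·⟩` in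
`Λ³(L̄, ad)`; in particular `J` and `J'` are cohomologous. -/
theorem stmt_7 (R : Type) [CommRing R] [IsDomain R] [IsDiscreteValuationRing R]
    (π : R) (hπ : Irreducible π) (k : ℕ) (hk : 1 ≤ k)
    (B : Type) [AddCommGroup B] [Module (Rmod R π (k + 1)) B]
    [Module.Free (Rmod R π (k + 1)) B] [Module.Finite (Rmod R π (k + 1)) B]
    (br : B →ₗ[Rmod R π (k + 1)] B →ₗ[Rmod R π (k + 1)] B)
    (halt : ∀ v, br v v = 0)
    (brL : Lred R π k B →ₗ[Rmod R π (k + 1)] Lred R π k B →ₗ[Rmod R π (k + 1)] Lred R π k B)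
    (hlift : ∀ x y : B, modk R π k B (br x y) = brL (modk R π k B x) (modk R π k B y))
    (hjacL : ∀ x y z : Lred R π k B, brL (brL x y) z + brL (brL y z) x + brL (brL z x) y = 0)
    (brb : Lbar R π k B →ₗ[Rmod R π (k + 1)] Lbar R π k B →ₗ[Rmod R π (k + 1)] Lbar R π k B)
    (hbrb : ∀ x y : B, lam R π k B (br x y) = brb (lam R π k B x) (lam R π k B y))
    (J : Lbar R π k B →ₗ[Rmod R π (k + 1)] Lbar R π k B →ₗ[Rmod R π (k + 1)]
      Lbar R π k B →ₗ[Rmod R π (k + 1)] Lbar R π k B)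
    (hJ : ∀ x y z : B, psi R π k B (J (lam R π k B x) (lam R π k B y) (lam R π k B z)) =
      br (br x y) z + br (br y z) x + br (br z x) y)
    (form : Lbar R π k B →ₗ[Rmod R π (k + 1)] Lbar R π k B →ₗ[Rmod R π (k + 1)] Lbar R π k B)
    (hformalt : ∀ v, form v v = 0)
    (br' : B →ₗ[Rmod R π (k + 1)] B →ₗ[Rmod R π (k + 1)] B)
    (hbr' : ∀ x y : B, br' x y = br x y + psi R π k B (form (lam R π k B x) (lam R π k B y)))
    (J' : Lbar R π k B →ₗ[Rmod R π (k + 1)] Lbar R π k B →ₗ[Rmod R π (k + 1)]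
      Lbar R π k B →ₗ[Rmod R π (k + 1)] Lbar R π k B)
    (hJ' : ∀ x y z : B, psi R π k B (J' (lam R π k B x) (lam R π k B y) (lam R π k B z)) =
      br' (br' x y) z + br' (br' y z) x + br' (br' z x) y)
    :
    ∀ x y z : Lbar R π k B,
      J' x y z = J x y z -
        (brb x (form y z) - brb y (form x z) + brb z (form x y)
          - form (brb x y) z + form (brb x z) y - form (brb y z) x) := by
  have hπ0 : π ≠ 0 := hπ.ne_zero
  have hsurj : Function.Surjective (lam R π k B) := Submodule.mkQ_surjective _
  have hpann : (pbar R π k) ^ (k + 1) = 0 := by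
    rw [← map_pow, Ideal.Quotient.eq_zero_iff_mem]
    exact Ideal.mem_span_singleton_self _
  haveI : Nontrivial (Rmod R π (k + 1)) := Ideal.Quotient.nontrivial_iff.mpr (by
    rw [Ne, Ideal.span_singleton_eq_top, pow_succ]
    intro h
    exact hπ.not_isUnit (isUnit_of_mul_isUnit_right h))
  -- pi kills Lbar
  have hp : ∀ v : Lbar R π k B, (pbar R π k) • v = 0 := by
    intro v
    obtain ⟨a, rfl⟩ := hsurj v
    rw [← map_smul]
    exact (Submodule.Quotient.mk_eq_zero _).mpr
      (Submodule.smul_mem_pointwise_smul a _ _ Submodule.mem_top)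
  have hpk : ∀ v : Lbar R π k B, (pbar R π k) ^ k • v = 0 := by
    intro v
    have h2 : (pbar R π k) ^ k = (pbar R π k) ^ (k - 1) * pbar R π k := by
      rw [← pow_succ, Nat.sub_add_cancel hk]
    rw [h2, mul_smul, hp, smul_zero]
  -- injectivity of psi
  have hinj : ∀ u : Lbar R π k B, psi R π k B u = 0 → u = 0 := by
    intro u hu
    obtain ⟨w, rfl⟩ := hsurj u
    rw [psi_apply] at hu
    let b := Module.Free.chooseBasis (Rmod R π (k + 1)) B
    have hcoord : ∀ i, (pbar R π k) ^ k * (b.repr w i) = 0 := by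
      intro i
      have h3 := congrArg (fun v => b.repr v i) hu
      simpa using h3
    choose s hs using fun i => ring_div R π hπ0 k _ (hcoord i)
    have hw : w ∈ piB R π k B := by
      rw [← SetLike.mem_coe, Submodule.coe_pointwise_smul, Set.mem_smul_set]
      refine ⟨∑ i, s i • b i, by trivial, ?_⟩
      rw [Finset.smul_sum]
      rw [Finset.sum_congr rfl (fun i _ => by rw [smul_smul, ← hs i])]
      exact b.sum_repr w
    exact (Submodule.Quotient.mk_eq_zero _).mpr hw
  -- lam of psi is zero
  have hlpsi : ∀ u : Lbar R π k B, lam R π k B (psi R π k B u) = 0 := by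
    intro u
    obtain ⟨a, rfl⟩ := hsurj u
    rw [psi_apply, map_smul, hpk]
  -- bracket with psi terms
  have hbrpsi_l : ∀ (u : Lbar R π k B) (w : B),
      br (psi R π k B u) w = psi R π k B (brb u (lam R π k B w)) := by
    intro u w
    obtain ⟨a, rfl⟩ := hsurj u
    rw [psi_apply, map_smul, LinearMap.smul_apply, ← hbrb, psi_apply]
  -- alternating / antisymmetry
  have hbrb_alt : ∀ u, brb u u = 0 := by
    intro u
    obtain ⟨a, rfl⟩ := hsurj u
    rw [← hbrb, halt, map_zero]
  have hbrb_anti : ∀ u v, brb u v = - brb v u := by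
    intro u v
    have h := hbrb_alt (u + v)
    simp only [map_add, LinearMap.add_apply, hbrb_alt, zero_add, add_zero] at h
    exact eq_neg_of_add_eq_zero_right h
  have hform_anti : ∀ u v, form u v = - form v u := by
    intro u v
    have h := hformalt (u + v)
    simp only [map_add, LinearMap.add_apply, hformalt, zero_add, add_zero] at h
    exact eq_neg_of_add_eq_zero_right h
  -- expansion of the deformed double bracket
  have expand : ∀ u v w : B, br' (br' u v) w =
      br (br u v) w + psi R π k B
        (brb (form (lam R π k B u) (lam R π k B v)) (lam R π k B w)
          + form (brb (lam R π k B u) (lam R π k B v)) (lam R π k B w)) := by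
    intro u v w
    rw [hbr' (br' u v) w, hbr' u v]
    simp only [map_add, LinearMap.add_apply, hbrpsi_l, hlpsi, hbrb, add_zero]
    abel
  intro x y z
  obtain ⟨a, rfl⟩ := hsurj x
  obtain ⟨b, rfl⟩ := hsurj y
  obtain ⟨c, rfl⟩ := hsurj z
  obtain ⟨E, hEdef⟩ : ∃ E : Lbar R π k B, E =
      (brb (form (lam R π k B a) (lam R π k B b)) (lam R π k B c)
        + form (brb (lam R π k B a) (lam R π k B b)) (lam R π k B c))
      + (brb (form (lam R π k B b) (lam R π k B c)) (lam R π k B a)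
        + form (brb (lam R π k B b) (lam R π k B c)) (lam R π k B a))
      + (brb (form (lam R π k B c) (lam R π k B a)) (lam R π k B b)
        + form (brb (lam R π k B c) (lam R π k B a)) (lam R π k B b)) := ⟨_, rfl⟩
  have key : psi R π k B (J' (lam R π k B a) (lam R π k B b) (lam R π k B c)) =
      psi R π k B (J (lam R π k B a) (lam R π k B b) (lam R π k B c) + E) := by
    rw [hJ' a b c]
    simp only [hEdef, map_add, expand, hJ]
    abel
  have hE : J' (lam R π k B a) (lam R π k B b) (lam R π k B c) =
      J (lam R π k B a) (lam R π k B b) (lam R π k B c) + E := by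
    have h := hinj (J' (lam R π k B a) (lam R π k B b) (lam R π k B c)
      - (J (lam R π k B a) (lam R π k B b) (lam R π k B c) + E))
      (by rw [map_sub, key, sub_self])
    exact sub_eq_zero.mp h
  have e1 : brb (lam R π k B a) (form (lam R π k B b) (lam R π k B c))
      = - brb (form (lam R π k B b) (lam R π k B c)) (lam R π k B a) := hbrb_anti _ _
  have e2 : brb (lam R π k B b) (form (lam R π k B a) (lam R π k B c))
      = brb (form (lam R π k B c) (lam R π k B a)) (lam R π k B b) := by
    rw [hform_anti (lam R π k B a) (lam R π k B c), map_neg,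
      hbrb_anti (form (lam R π k B c) (lam R π k B a)) (lam R π k B b)]
  have e3 : brb (lam R π k B c) (form (lam R π k B a) (lam R π k B b))
      = - brb (form (lam R π k B a) (lam R π k B b)) (lam R π k B c) := hbrb_anti _ _
  have e4 : form (brb (lam R π k B a) (lam R π k B c)) (lam R π k B b)
      = - form (brb (lam R π k B c) (lam R π k B a)) (lam R π k B b) := by
    rw [hbrb_anti (lam R π k B a) (lam R π k B c), map_neg, LinearMap.neg_apply]
  rw [hE, e1, e2, e3, e4, hEdef]
  abel
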